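/- arXiv:gr-qc/0212055 — 2 statements merged into one kernel-verified Lean document; each statement's English description precedes it below -/
import Mathlib

section
/- Let ρ : ℝ² → ℝ be twice continuously differentiable and let f₁, f₂ : ℝ → ℝ be arbitrary functions. Define L₁₂₁(x¹,x²) := e^{2ρ(x¹,x²)} f₁(x¹) − (1/4) e^{2ρ(x¹,x²)} ∂₁ρ(x¹,x²) and L₁₂₂(x¹,x²) := e^{2ρ(x¹,x²)} f₂(x²) + (1/4) e^{2ρ(x¹,x²)} ∂₂ρ(x¹,x²). Then at every point of ℝ² the two equations (E1) −e^{2ρ}∂₁∂₂ρ + 4L₁₂₁∂₂ρ − 4L₁₂₂∂₁ρ − 2∂₂L₁₂₁ + 2∂₁L₁₂₂ = 0 and (E2) 2L₁₂₁∂₂ρ + 2L₁₂₂∂₁ρ − ∂₂L₁₂₁ − ∂₁L₁₂₂ = 0 hold. -/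
/-- Partial derivative of `f : ℝ² → ℝ` with respect to the `i`-th coordinate,
taken as the derivative along the corresponding coordinate line. -/
noncomputable def pd (i : Fin 2) (f : (Fin 2 → ℝ) → ℝ) : (Fin 2 → ℝ) → ℝ :=
  fun x => deriv (fun t => f (Function.update x i t)) (x i)

section Aux

variable {f : (Fin 2 → ℝ) → ℝ}

lemma hasDerivAt_pd (hf : Differentiable ℝ f) (i : Fin 2) (x : Fin 2 → ℝ) :
    HasDerivAt (fun t => f (Function.update x i t))
      (fderiv ℝ f x (Pi.single i 1)) (x i) := by
  have h1 : HasDerivAt (Function.update x i) (Pi.single i (1 : ℝ)) (x i) :=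
    hasDerivAt_update x i (x i)
  have h2 : HasFDerivAt f (fderiv ℝ f x) (Function.update x i (x i)) := by
    rw [Function.update_eq_self]; exact (hf x).hasFDerivAt
  exact h2.comp_hasDerivAt (x i) h1

lemma pd_eq_fderiv (hf : Differentiable ℝ f) (i : Fin 2) (x : Fin 2 → ℝ) :
    pd i f x = fderiv ℝ f x (Pi.single i 1) :=
  (hasDerivAt_pd hf i x).deriv

lemma hasDerivAt_pd' (hf : Differentiable ℝ f) (i : Fin 2) (x : Fin 2 → ℝ) :
    HasDerivAt (fun t => f (Function.update x i t)) (pd i f x) (x i) := by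
  rw [pd_eq_fderiv hf]; exact hasDerivAt_pd hf i x

lemma pd_differentiable {ρ : (Fin 2 → ℝ) → ℝ} (hρ : ContDiff ℝ 2 ρ) (i : Fin 2) :
    Differentiable ℝ (pd i ρ) := by
  have hd : Differentiable ℝ ρ := hρ.differentiable two_ne_zero
  have h1 : ContDiff ℝ 1 (fderiv ℝ ρ) := hρ.fderiv_right (le_refl _)
  have h2 : Differentiable ℝ (fun x => fderiv ℝ ρ x (Pi.single i 1)) :=
    (h1.clm_apply contDiff_const).differentiable one_ne_zero
  have : pd i ρ = fun x => fderiv ℝ ρ x (Pi.single i 1) := by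
    funext x; exact pd_eq_fderiv hd i x
  rw [this]; exact h2

lemma pd_symm {ρ : (Fin 2 → ℝ) → ℝ} (hρ : ContDiff ℝ 2 ρ) (x : Fin 2 → ℝ) :
    pd 0 (pd 1 ρ) x = pd 1 (pd 0 ρ) x := by
  have hd : Differentiable ℝ ρ := hρ.differentiable two_ne_zero
  have hd1 : Differentiable ℝ (fderiv ℝ ρ) :=
    (hρ.fderiv_right (le_refl _)).differentiable one_ne_zero
  have hpd : ∀ j : Fin 2, pd j ρ = fun y => fderiv ℝ ρ y (Pi.single j 1) := by
    intro j; funext y; exact pd_eq_fderiv hd j y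
  have key : ∀ i j : Fin 2,
      pd i (pd j ρ) x = fderiv ℝ (fderiv ℝ ρ) x (Pi.single i 1) (Pi.single j 1) := by
    intro i j
    have hdiff : Differentiable ℝ (pd j ρ) := pd_differentiable hρ j
    rw [pd_eq_fderiv hdiff i x, hpd j]
    rw [fderiv_clm_apply (hd1 x) (differentiableAt_const _)]
    simp
  rw [key 0 1, key 1 0]
  exact second_derivative_symmetric (fun y => (hd y).hasFDerivAt)
    (hd1 x).hasFDerivAt _ _

end Aux

/-- For any C² function `ρ` and arbitrary `f₁, f₂ : ℝ → ℝ`, the pair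
`L₁₂₁ = e^{2ρ} f₁(x¹) − (1/4) e^{2ρ} ∂₁ρ`, `L₁₂₂ = e^{2ρ} f₂(x²) + (1/4) e^{2ρ} ∂₂ρ`
satisfies both 2-dimensional Riemann-Lanczos equations (E1) and (E2) everywhere.
Coordinate `xⁱ` corresponds to index `i - 1 : Fin 2`. -/
theorem riemann_lanczos_2d_solution_check
    (ρ : (Fin 2 → ℝ) → ℝ) (hρ : ContDiff ℝ 2 ρ)
    (f₁ f₂ : ℝ → ℝ)
    (L121 L122 : (Fin 2 → ℝ) → ℝ)
    (hL121 : ∀ x : Fin 2 → ℝ,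
      L121 x = Real.exp (2 * ρ x) * f₁ (x 0)
        - (1/4) * Real.exp (2 * ρ x) * pd 0 ρ x)
    (hL122 : ∀ x : Fin 2 → ℝ,
      L122 x = Real.exp (2 * ρ x) * f₂ (x 1)
        + (1/4) * Real.exp (2 * ρ x) * pd 1 ρ x) :
    (∀ x : Fin 2 → ℝ,
      -Real.exp (2 * ρ x) * pd 0 (pd 1 ρ) x + 4 * L121 x * pd 1 ρ x
        - 4 * L122 x * pd 0 ρ x - 2 * pd 1 L121 x + 2 * pd 0 L122 x = 0) ∧
    (∀ x : Fin 2 → ℝ,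
      2 * L121 x * pd 1 ρ x + 2 * L122 x * pd 0 ρ x
        - pd 1 L121 x - pd 0 L122 x = 0) := by
  have hd : Differentiable ℝ ρ := hρ.differentiable two_ne_zero
  have hpd0 : Differentiable ℝ (pd 0 ρ) := pd_differentiable hρ 0
  have hpd1 : Differentiable ℝ (pd 1 ρ) := pd_differentiable hρ 1
  -- key derivative computations
  have key : ∀ x : Fin 2 → ℝ,
      pd 1 L121 x = Real.exp (2 * ρ x) * (2 * pd 1 ρ x) * f₁ (x 0)
        - (1/4) * (Real.exp (2 * ρ x) * (2 * pd 1 ρ x) * pd 0 ρ x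
            + Real.exp (2 * ρ x) * pd 1 (pd 0 ρ) x) ∧
      pd 0 L122 x = Real.exp (2 * ρ x) * (2 * pd 0 ρ x) * f₂ (x 1)
        + (1/4) * (Real.exp (2 * ρ x) * (2 * pd 0 ρ x) * pd 1 ρ x
            + Real.exp (2 * ρ x) * pd 0 (pd 1 ρ) x) := by
    intro x
    constructor
    · -- pd 1 L121
      have hρc : HasDerivAt (fun t => ρ (Function.update x 1 t)) (pd 1 ρ x) (x 1) :=
        hasDerivAt_pd' hd 1 x
      have hec : HasDerivAt (fun t => Real.exp (2 * ρ (Function.update x 1 t)))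
          (Real.exp (2 * ρ x) * (2 * pd 1 ρ x)) (x 1) := by
        have := (hρc.const_mul 2).exp
        simpa [Function.update_eq_self] using this
      have hpc : HasDerivAt (fun t => pd 0 ρ (Function.update x 1 t))
          (pd 1 (pd 0 ρ) x) (x 1) := hasDerivAt_pd' hpd0 1 x
      have hfun : (fun t => L121 (Function.update x 1 t)) =
          fun t => Real.exp (2 * ρ (Function.update x 1 t)) * f₁ (x 0)
            - (1/4) * (Real.exp (2 * ρ (Function.update x 1 t))
                * pd 0 ρ (Function.update x 1 t)) := by
        funext t
        rw [hL121 (Function.update x 1 t)]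
        have : Function.update x 1 t 0 = x 0 := by
          simp [Function.update_apply]
        rw [this]; ring
      have hD : HasDerivAt (fun t => L121 (Function.update x 1 t))
          (Real.exp (2 * ρ x) * (2 * pd 1 ρ x) * f₁ (x 0)
            - (1/4) * (Real.exp (2 * ρ x) * (2 * pd 1 ρ x) * pd 0 ρ x
                + Real.exp (2 * ρ x) * pd 1 (pd 0 ρ) x)) (x 1) := by
        rw [hfun]
        have := (hec.mul_const (f₁ (x 0))).sub ((hec.mul hpc).const_mul (1/4))
        exact this.congr_deriv (by simp [Function.update_eq_self])
      exact hD.deriv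
    · -- pd 0 L122
      have hρc : HasDerivAt (fun t => ρ (Function.update x 0 t)) (pd 0 ρ x) (x 0) :=
        hasDerivAt_pd' hd 0 x
      have hec : HasDerivAt (fun t => Real.exp (2 * ρ (Function.update x 0 t)))
          (Real.exp (2 * ρ x) * (2 * pd 0 ρ x)) (x 0) := by
        have := (hρc.const_mul 2).exp
        simpa [Function.update_eq_self] using this
      have hpc : HasDerivAt (fun t => pd 1 ρ (Function.update x 0 t))
          (pd 0 (pd 1 ρ) x) (x 0) := hasDerivAt_pd' hpd1 0 x
      have hfun : (fun t => L122 (Function.update x 0 t)) =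
          fun t => Real.exp (2 * ρ (Function.update x 0 t)) * f₂ (x 1)
            + (1/4) * (Real.exp (2 * ρ (Function.update x 0 t))
                * pd 1 ρ (Function.update x 0 t)) := by
        funext t
        rw [hL122 (Function.update x 0 t)]
        have : Function.update x 0 t 1 = x 1 := by
          simp [Function.update_apply]
        rw [this]; ring
      have hD : HasDerivAt (fun t => L122 (Function.update x 0 t))
          (Real.exp (2 * ρ x) * (2 * pd 0 ρ x) * f₂ (x 1)
            + (1/4) * (Real.exp (2 * ρ x) * (2 * pd 0 ρ x) * pd 1 ρ x
                + Real.exp (2 * ρ x) * pd 0 (pd 1 ρ) x)) (x 0) := by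
        rw [hfun]
        have := (hec.mul_const (f₂ (x 1))).add ((hec.mul hpc).const_mul (1/4))
        exact this.congr_deriv (by simp [Function.update_eq_self])
      exact hD.deriv
  constructor <;> intro x <;>
    [skip; skip] <;>
    · obtain ⟨h1, h2⟩ := key x
      rw [h1, h2, hL121 x, hL122 x, pd_symm hρ x]
      ring
end

section
/- Let ρ : ℝ² → ℝ be twice continuously differentiable and let L₁₂₂ : ℝ² → ℝ be any continuously differentiable function. Then there exists a function L₁₂₁ : ℝ² → ℝ, differentiable with respect to x², such that at every point of ℝ² the single Riemann-Lanczos equation (E1) −e^{2ρ}∂₁∂₂ρ + 4L₁₂₁∂₂ρ − 4L₁₂₂∂₁ρ − 2∂₂L₁₂₁ + 2∂₁L₁₂₂ = 0 holds. (This reflects that without the differential gauge condition the 2-dimensional Riemann-Lanczos problem is in involution and its general solution contains one arbitrary function of the two independent variables.) -/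
/-- Derivative along a coordinate line of a function with a full derivative. -/
lemma hasDerivAt_comp_update (f : (Fin 2 → ℝ) → ℝ) (f' : (Fin 2 → ℝ) →L[ℝ] ℝ)
    (x : Fin 2 → ℝ) (i : Fin 2) (t : ℝ)
    (hf : HasFDerivAt f f' (Function.update x i t)) :
    HasDerivAt (fun s => f (Function.update x i s)) (f' (Pi.single i 1)) t := by
  exact hf.comp_hasDerivAt t (hasDerivAt_update x i t)

lemma line (f : (Fin 2 → ℝ) → ℝ) (hf : Differentiable ℝ f) (x : Fin 2 → ℝ) (i : Fin 2) :
    HasDerivAt (fun s => f (Function.update x i s)) (fderiv ℝ f x (Pi.single i 1)) (x i) := by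
  have h := hasDerivAt_comp_update f (fderiv ℝ f (Function.update x i (x i))) x i (x i)
    ((hf _).hasFDerivAt)
  rwa [Function.update_eq_self] at h

lemma pd_eq (f : (Fin 2 → ℝ) → ℝ) (hf : Differentiable ℝ f) (x : Fin 2 → ℝ) (i : Fin 2) :
    pd i f x = fderiv ℝ f x (Pi.single i 1) :=
  (line f hf x i).deriv

/-- For any C² function `ρ` and any C¹ function `L₁₂₂`, there exists a function `L₁₂₁`,
differentiable with respect to `x²`, solving the single 2-dimensional Riemann-Lanczos
equation (E1) (no differential gauge condition imposed) everywhere.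
Coordinate `xⁱ` corresponds to `i - 1 : Fin 2`. -/
theorem riemann_lanczos_2d_no_gauge_solvable
    (ρ L122 : (Fin 2 → ℝ) → ℝ)
    (hρ : ContDiff ℝ 2 ρ) (hL122 : ContDiff ℝ 1 L122) :
    ∃ L121 : (Fin 2 → ℝ) → ℝ,
      (∀ x : Fin 2 → ℝ,
        DifferentiableAt ℝ (fun t => L121 (Function.update x 1 t)) (x 1)) ∧
      (∀ x : Fin 2 → ℝ,
        -Real.exp (2 * ρ x) * pd 0 (pd 1 ρ) x + 4 * L121 x * pd 1 ρ x
          - 4 * L122 x * pd 0 ρ x - 2 * pd 1 L121 x + 2 * pd 0 L122 x = 0) := by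
  have hρ1 : ContDiff ℝ 1 ρ := hρ.of_le one_le_two
  have hρd : Differentiable ℝ ρ := hρ1.differentiable one_ne_zero
  have hLd : Differentiable ℝ L122 := hL122.differentiable one_ne_zero
  have hρ' : ContDiff ℝ 1 (fderiv ℝ ρ) := hρ.fderiv_right (by norm_num)
  have hρ'd : Differentiable ℝ (fderiv ℝ ρ) := hρ'.differentiable one_ne_zero
  -- derivative along a line of `y ↦ fderiv ρ y (e j)`
  have lineQ : ∀ (x : Fin 2 → ℝ) (i j : Fin 2),
      HasDerivAt (fun s => fderiv ℝ ρ (Function.update x i s) (Pi.single j 1))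
        (fderiv ℝ (fderiv ℝ ρ) x (Pi.single i 1) (Pi.single j 1)) (x i) := by
    intro x i j
    have hQ0 := ((ContinuousLinearMap.apply ℝ ℝ ((Pi.single j 1 : Fin 2 → ℝ))).hasFDerivAt).comp
      (Function.update x i (x i)) (hρ'd (Function.update x i (x i))).hasFDerivAt
    have hQ : HasFDerivAt (fun y => fderiv ℝ ρ y (Pi.single j 1))
        ((ContinuousLinearMap.apply ℝ ℝ ((Pi.single j 1 : Fin 2 → ℝ))).comp
          (fderiv ℝ (fderiv ℝ ρ) (Function.update x i (x i)))) (Function.update x i (x i)) := hQ0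
    have h := hasDerivAt_comp_update _ _ x i (x i) hQ
    rw [Function.update_eq_self] at h
    simpa using h
  set F : (Fin 2 → ℝ) → ℝ := fun y => Real.exp (-(2 * ρ y)) * L122 y with hFdef
  have hF : ContDiff ℝ 1 F :=
    ((Real.contDiff_exp.of_le le_top).comp ((contDiff_const.mul hρ1).neg)).mul hL122
  have hFd : Differentiable ℝ F := hF.differentiable one_ne_zero
  set g : (Fin 2 → ℝ) → ℝ := fun y => fderiv ℝ F y (Pi.single 0 1) with hgdef
  have hgc : Continuous g := (hF.continuous_fderiv one_ne_zero).clm_apply continuous_const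
  have hupd : ∀ (x : Fin 2 → ℝ) (i : Fin 2), Continuous (fun s : ℝ => Function.update x i s) :=
    fun x i => continuous_iff_continuousAt.2 fun s => (hasDerivAt_update x i s).continuousAt
  set I : (Fin 2 → ℝ) → ℝ :=
    fun y => ∫ s in (0:ℝ)..(y 1), g (Function.update y 1 s) with hIdef
  set L121 : (Fin 2 → ℝ) → ℝ :=
    fun y => Real.exp (2 * ρ y) * (-(1/2) * fderiv ℝ ρ y (Pi.single 0 1) + I y) with hLdef
  -- derivative of I along x²
  have hI : ∀ x : Fin 2 → ℝ,
      HasDerivAt (fun t => I (Function.update x 1 t)) (g x) (x 1) := by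
    intro x
    have hfun : (fun t => I (Function.update x 1 t))
        = fun t => ∫ s in (0:ℝ)..t, g (Function.update x 1 s) := by
      funext t
      simp only [hIdef, Function.update_self, Function.update_idem]
    rw [hfun]
    have hgx : Continuous fun s : ℝ => g (Function.update x 1 s) := hgc.comp (hupd x 1)
    have h := intervalIntegral.integral_hasDerivAt_right
      (hgx.intervalIntegrable 0 (x 1))
      (hgx.stronglyMeasurable.stronglyMeasurableAtFilter)
      hgx.continuousAt
    simpa [Function.update_eq_self] using h
  -- the main derivative computation for L121 along x²
  have hD : ∀ x : Fin 2 → ℝ,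
      HasDerivAt (fun t => L121 (Function.update x 1 t))
        (Real.exp (2 * ρ x) * (2 * fderiv ℝ ρ x (Pi.single 1 1))
            * (-(1/2) * fderiv ℝ ρ x (Pi.single 0 1) + I x)
          + Real.exp (2 * ρ x)
            * (-(1/2) * fderiv ℝ (fderiv ℝ ρ) x (Pi.single 1 1) (Pi.single 0 1) + g x))
        (x 1) := by
    intro x
    have hE : HasDerivAt (fun t => Real.exp (2 * ρ (Function.update x 1 t)))
        (Real.exp (2 * ρ x) * (2 * fderiv ℝ ρ x (Pi.single 1 1))) (x 1) := by
      have := ((line ρ hρd x 1).const_mul 2).exp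
      simpa [Function.update_eq_self] using this
    have hInner : HasDerivAt
        (fun t => -(1/2) * fderiv ℝ ρ (Function.update x 1 t) (Pi.single 0 1)
          + I (Function.update x 1 t))
        (-(1/2) * fderiv ℝ (fderiv ℝ ρ) x (Pi.single 1 1) (Pi.single 0 1) + g x) (x 1) :=
      ((lineQ x 1 0).const_mul (-(1/2))).add (hI x)
    have := hE.mul hInner
    simp only [hLdef]
    simpa [Function.update_eq_self, Pi.mul_def] using this
  refine ⟨L121, fun x => (hD x).differentiableAt, fun x => ?_⟩
  -- notation
  have hsymm : fderiv ℝ (fderiv ℝ ρ) x (Pi.single 0 1) (Pi.single 1 1)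
      = fderiv ℝ (fderiv ℝ ρ) x (Pi.single 1 1) (Pi.single 0 1) :=
    (hρ.contDiffAt.isSymmSndFDerivAt (by simp [minSmoothness_of_isRCLikeNormedField])) _ _
  have h01 : pd 0 (pd 1 ρ) x
      = fderiv ℝ (fderiv ℝ ρ) x (Pi.single 0 1) (Pi.single 1 1) := by
    have hfun : pd 1 ρ = fun y => fderiv ℝ ρ y (Pi.single 1 1) :=
      funext fun y => pd_eq ρ hρd y 1
    rw [hfun]
    exact (lineQ x 0 1).deriv
  have hp1 : pd 1 ρ x = fderiv ℝ ρ x (Pi.single 1 1) := pd_eq ρ hρd x 1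
  have hp0 : pd 0 ρ x = fderiv ℝ ρ x (Pi.single 0 1) := pd_eq ρ hρd x 0
  have hq0 : pd 0 L122 x = fderiv ℝ L122 x (Pi.single 0 1) := pd_eq L122 hLd x 0
  have hDL : pd 1 L121 x
      = Real.exp (2 * ρ x) * (2 * fderiv ℝ ρ x (Pi.single 1 1))
            * (-(1/2) * fderiv ℝ ρ x (Pi.single 0 1) + I x)
          + Real.exp (2 * ρ x)
            * (-(1/2) * fderiv ℝ (fderiv ℝ ρ) x (Pi.single 1 1) (Pi.single 0 1) + g x) :=
    (hD x).deriv
  have hgx : g x = Real.exp (-(2 * ρ x)) * (-(2 * fderiv ℝ ρ x (Pi.single 0 1))) * L122 x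
      + Real.exp (-(2 * ρ x)) * fderiv ℝ L122 x (Pi.single 0 1) := by
    have h1 : HasDerivAt (fun s => F (Function.update x 0 s)) (g x) (x 0) := line F hFd x 0
    have h2 : HasDerivAt (fun s => F (Function.update x 0 s))
        (Real.exp (-(2 * ρ x)) * (-(2 * fderiv ℝ ρ x (Pi.single 0 1))) * L122 x
          + Real.exp (-(2 * ρ x)) * fderiv ℝ L122 x (Pi.single 0 1)) (x 0) := by
      have := (((line ρ hρd x 0).const_mul 2).neg.exp).mul (line L122 hLd x 0)
      simpa [hFdef, Function.update_eq_self, Pi.mul_def] using this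
    exact h1.unique h2
  have hab : Real.exp (2 * ρ x) * Real.exp (-(2 * ρ x)) = 1 := by
    rw [← Real.exp_add, add_neg_cancel, Real.exp_zero]
  have hLx : L121 x
      = Real.exp (2 * ρ x) * (-(1/2) * fderiv ℝ ρ x (Pi.single 0 1) + I x) := rfl
  rw [h01, hp1, hp0, hq0, hDL, hgx, hLx, hsymm]
  linear_combination (4 * (fderiv ℝ ρ x) (Pi.single 0 1) * L122 x
    - 2 * (fderiv ℝ L122 x) (Pi.single 0 1)) * hab
end
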